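/- (Rank-one projection norm bound (eb.1)) Let H be a complex Hilbert space, let P : H → H be a continuous linear map with P ∘ P = P whose range is one-dimensional, spanned by a vector φ ≠ 0 with Pφ = φ. Set c := ‖ P* ∘ (1 − P) ‖ (operator norm, P* the Hilbert-space adjoint of P), and assume c < 1. Then for every complex normed space K and every continuous linear map A : H → K: ‖ A ∘ P ‖ ≤ ‖Aφ‖ / ( ‖φ‖ · (1 − c²)^{1/2} ). -/

import Mathlib

noncomputable section

/-- Rank-one projection norm bound (eb.1). -/
theorem rank_one_projection_norm_bound
    {H : Type*} [NormedAddCommGroup H] [InnerProductSpace ℂ H] [CompleteSpace H]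
    {K : Type*} [NormedAddCommGroup K] [NormedSpace ℂ K]
    (P : H →L[ℂ] H) (hP : P.comp P = P)
    (φ : H) (hφ : φ ≠ 0) (hPφ : P φ = φ)
    (hrange : LinearMap.range (P : H →ₗ[ℂ] H) = Submodule.span ℂ {φ})
    (c : ℝ)
    (hc : c = ‖(ContinuousLinearMap.adjoint P).comp
      (ContinuousLinearMap.id ℂ H - P)‖)
    (hc1 : c < 1)
    (A : H →L[ℂ] K) :
    ‖A.comp P‖ ≤ ‖A φ‖ / (‖φ‖ * Real.sqrt (1 - c ^ 2)) := by
  have hc0 : 0 ≤ c := hc ▸ norm_nonneg _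
  have h1c : 0 < 1 - c ^ 2 := by nlinarith
  have hs : 0 < Real.sqrt (1 - c ^ 2) := Real.sqrt_pos.mpr h1c
  have hφ0 : 0 < ‖φ‖ := norm_pos_iff.mpr hφ
  have hidem : ∀ x : H, P (P x) = P x := fun x => by
    rw [← ContinuousLinearMap.comp_apply, hP]
  -- key bound : ‖P x‖ * sqrt (1 - c²) ≤ ‖x‖
  have key : ∀ x : H, ‖P x‖ * Real.sqrt (1 - c ^ 2) ≤ ‖x‖ := by
    intro x
    set a := ‖P x‖ with ha
    set b := ‖x - P x‖ with hb
    have ha0 : 0 ≤ a := norm_nonneg _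
    have hb0 : 0 ≤ b := norm_nonneg _
    -- inner product bound
    have hinner : |(inner ℂ (P x) (x - P x) : ℂ).re| ≤ c * a * b := by
      have h1 : (inner ℂ (P x) (x - P x) : ℂ)
          = inner ℂ (P x) ((ContinuousLinearMap.adjoint P) (x - P x)) := by
        rw [ContinuousLinearMap.adjoint_inner_right]
        rw [hidem x]
      have h2 : (ContinuousLinearMap.adjoint P) (x - P x)
          = ((ContinuousLinearMap.adjoint P).comp
              (ContinuousLinearMap.id ℂ H - P)) (x - P x) := by
        simp [ContinuousLinearMap.comp_apply, map_sub, hidem x]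
      have h3 : ‖((ContinuousLinearMap.adjoint P).comp
              (ContinuousLinearMap.id ℂ H - P)) (x - P x)‖ ≤ c * b := by
        rw [hc]
        exact ContinuousLinearMap.le_opNorm _ _
      calc |(inner ℂ (P x) (x - P x) : ℂ).re|
          ≤ ‖(inner ℂ (P x) (x - P x) : ℂ)‖ := Complex.abs_re_le_norm _
        _ = ‖(inner ℂ (P x) ((ContinuousLinearMap.adjoint P) (x - P x)) : ℂ)‖ := by rw [h1]
        _ ≤ ‖P x‖ * ‖(ContinuousLinearMap.adjoint P) (x - P x)‖ := norm_inner_le_norm _ _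
        _ ≤ a * (c * b) := by
            rw [← ha]
            apply mul_le_mul_of_nonneg_left _ ha0
            rw [h2]; exact h3
        _ = c * a * b := by ring
    have hexp : ‖x‖ ^ 2 = a ^ 2 + 2 * (inner ℂ (P x) (x - P x) : ℂ).re + b ^ 2 := by
      have hx : x = P x + (x - P x) := by abel
      calc ‖x‖ ^ 2 = ‖P x + (x - P x)‖ ^ 2 := by rw [← hx]
        _ = a ^ 2 + 2 * (inner ℂ (P x) (x - P x) : ℂ).re + b ^ 2 := by
            have h := @norm_add_sq ℂ _ _ _ _ (P x) (x - P x)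
            exact h
    have hsq : (1 - c ^ 2) * a ^ 2 ≤ ‖x‖ ^ 2 := by
      have := abs_le.mp hinner
      nlinarith [sq_nonneg (b - c * a)]
    have h4 : (a * Real.sqrt (1 - c ^ 2)) ^ 2 ≤ ‖x‖ ^ 2 := by
      rw [mul_pow, Real.sq_sqrt h1c.le]
      linarith
    have h5 := Real.sqrt_le_sqrt h4
    rwa [Real.sqrt_sq (by positivity), Real.sqrt_sq (norm_nonneg x)] at h5
  -- pointwise equality for A ∘ P
  have keyA : ∀ x : H, ‖A (P x)‖ * ‖φ‖ = ‖P x‖ * ‖A φ‖ := by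
    intro x
    have hmem : P x ∈ Submodule.span ℂ {φ} := by
      rw [← hrange]
      exact ⟨x, rfl⟩
    obtain ⟨k, hk⟩ := Submodule.mem_span_singleton.mp hmem
    rw [← hk, map_smul, norm_smul, norm_smul]
    ring
  rw [div_eq_inv_mul, ← div_eq_inv_mul]
  apply ContinuousLinearMap.opNorm_le_bound
  · positivity
  · intro x
    rw [ContinuousLinearMap.comp_apply]
    rw [div_mul_eq_mul_div, le_div_iff₀ (by positivity)]
    have h6 : ‖A (P x)‖ * (‖φ‖ * Real.sqrt (1 - c ^ 2))
        = (‖P x‖ * Real.sqrt (1 - c ^ 2)) * ‖A φ‖ := by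
      rw [show ‖A (P x)‖ * (‖φ‖ * Real.sqrt (1 - c ^ 2))
          = (‖A (P x)‖ * ‖φ‖) * Real.sqrt (1 - c ^ 2) by ring, keyA x]
      ring
    rw [h6]
    calc (‖P x‖ * Real.sqrt (1 - c ^ 2)) * ‖A φ‖
        ≤ ‖x‖ * ‖A φ‖ := mul_le_mul_of_nonneg_right (key x) (norm_nonneg _)
      _ = ‖A φ‖ * ‖x‖ := mul_comm _ _

end
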